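/- Finite-range independence implies ergodicity of the shift: let μ be a probability measure on the product measurable space ℝ^ℝ (with the cylindrical σ-algebra) that is invariant under every shift τ_h, where τ_h(ω) = ω(·+h). Suppose there exists κ > 0 such that for all real a ≤ b with b−a ≥ κ, the σ-algebra generated by the coordinate maps ω ↦ ω(s) for s ≤ a and the σ-algebra generated by the coordinate maps ω ↦ ω(s) for s ≥ b are independent under μ. Then every measurable set A ⊆ ℝ^ℝ satisfying τ_h^{−1}(A) = A for all h ∈ ℝ has μ(A) = 0 or μ(A) = 1. -/

import Mathlib

open MeasureTheory MeasurableSpace Set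
open scoped symmDiff

/-- The shift `τ_h ω = ω(· + h)` on the path space `ℝ^ℝ`. -/
def pathShift (h : ℝ) : (ℝ → ℝ) → (ℝ → ℝ) := fun ω => fun t => ω (t + h)

/-- The σ-algebra on `ℝ^ℝ` generated by the coordinates `ω ↦ ω(s)`, `s ≤ a`. -/
def pastSigma (a : ℝ) : MeasurableSpace (ℝ → ℝ) :=
  ⨆ s ∈ Set.Iic a, MeasurableSpace.comap (fun ω : ℝ → ℝ => ω s) inferInstance

/-- The σ-algebra on `ℝ^ℝ` generated by the coordinates `ω ↦ ω(s)`, `s ≥ b`. -/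
def futureSigma (b : ℝ) : MeasurableSpace (ℝ → ℝ) :=
  ⨆ s ∈ Set.Ici b, MeasurableSpace.comap (fun ω : ℝ → ℝ => ω s) inferInstance

lemma pastSigma_le (a : ℝ) : pastSigma a ≤ (inferInstance : MeasurableSpace (ℝ → ℝ)) :=
  iSup₂_le fun s _ => (measurable_pi_apply s).comap_le

lemma futureSigma_le (b : ℝ) : futureSigma b ≤ (inferInstance : MeasurableSpace (ℝ → ℝ)) :=
  iSup₂_le fun s _ => (measurable_pi_apply s).comap_le

lemma pastSigma_mono : Monotone pastSigma := fun a a' h =>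
  iSup₂_le fun s hs => le_iSup₂ (f := fun s (_ : s ∈ Set.Iic a') =>
    MeasurableSpace.comap (fun ω : ℝ → ℝ => ω s) inferInstance) s (le_trans hs h)

def pastAlg : Set (Set (ℝ → ℝ)) := {C | ∃ a : ℝ, MeasurableSet[pastSigma a] C}
def futureAlg : Set (Set (ℝ → ℝ)) := {C | ∃ b : ℝ, MeasurableSet[futureSigma b] C}

lemma isSetAlgebra_pastAlg : IsSetAlgebra pastAlg where
  empty_mem := ⟨0, @MeasurableSet.empty _ (pastSigma 0)⟩
  compl_mem := fun s ⟨a, h⟩ => ⟨a, h.compl⟩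
  union_mem := fun s t ⟨a, hs⟩ ⟨a', ht⟩ =>
    ⟨max a a', (pastSigma_mono (le_max_left a a') _ hs).union
      (pastSigma_mono (le_max_right a a') _ ht)⟩

lemma gen_pastAlg : (inferInstance : MeasurableSpace (ℝ → ℝ)) = generateFrom pastAlg := by
  apply le_antisymm
  · refine iSup_le fun s => ?_
    intro C hC
    exact measurableSet_generateFrom ⟨s, le_iSup₂ (f := fun t (_ : t ∈ Set.Iic s) =>
      MeasurableSpace.comap (fun ω : ℝ → ℝ => ω t) inferInstance) s Set.self_mem_Iic _ hC⟩
  · exact generateFrom_le fun C ⟨a, h⟩ => pastSigma_le a _ h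

lemma futureSigma_anti : Antitone futureSigma := fun b b' h =>
  iSup₂_le fun s hs => le_iSup₂ (f := fun s (_ : s ∈ Set.Ici b) =>
    MeasurableSpace.comap (fun ω : ℝ → ℝ => ω s) inferInstance) s (le_trans h hs)

lemma isSetAlgebra_futureAlg : IsSetAlgebra futureAlg where
  empty_mem := ⟨0, @MeasurableSet.empty _ (futureSigma 0)⟩
  compl_mem := fun s ⟨b, h⟩ => ⟨b, h.compl⟩
  union_mem := fun s t ⟨b, hs⟩ ⟨b', ht⟩ =>
    ⟨min b b', (futureSigma_anti (min_le_left b b') _ hs).union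
      (futureSigma_anti (min_le_right b b') _ ht)⟩

lemma gen_futureAlg : (inferInstance : MeasurableSpace (ℝ → ℝ)) = generateFrom futureAlg := by
  apply le_antisymm
  · refine iSup_le fun s => ?_
    intro C hC
    exact measurableSet_generateFrom ⟨s, le_iSup₂ (f := fun t (_ : t ∈ Set.Ici s) =>
      MeasurableSpace.comap (fun ω : ℝ → ℝ => ω t) inferInstance) s Set.self_mem_Ici _ hC⟩
  · exact generateFrom_le fun C ⟨b, h⟩ => futureSigma_le b _ h

lemma comap_pathShift_future (h b : ℝ) :
    MeasurableSpace.comap (pathShift h) (futureSigma b) ≤ futureSigma (b + h) := by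
  rw [futureSigma, MeasurableSpace.comap_iSup]
  refine iSup_le fun s => ?_
  rw [MeasurableSpace.comap_iSup]
  refine iSup_le fun hs => ?_
  rw [MeasurableSpace.comap_comp]
  have : ((fun ω : ℝ → ℝ => ω s) ∘ pathShift h) = fun ω : ℝ → ℝ => ω (s + h) := rfl
  rw [this]
  exact le_iSup₂ (f := fun t (_ : t ∈ Set.Ici (b + h)) =>
    MeasurableSpace.comap (fun ω : ℝ → ℝ => ω t) inferInstance) (s + h)
    (by simp only [Set.mem_Ici] at hs ⊢; linarith)

lemma preimage_future {b h : ℝ} {C : Set (ℝ → ℝ)} (hC : MeasurableSet[futureSigma b] C) :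
    MeasurableSet[futureSigma (b + h)] (pathShift h ⁻¹' C) :=
  comap_pathShift_future h b _ ⟨C, hC, rfl⟩

/-- Finite-range independence implies ergodicity of the shift: a shift-invariant
probability measure on `ℝ^ℝ` whose past before `a` and future after `b` are independent
whenever `b - a ≥ κ` gives measure `0` or `1` to every shift-invariant measurable set. -/
theorem finite_range_independence_implies_ergodic
    (μ : Measure (ℝ → ℝ)) [IsProbabilityMeasure μ]
    (hinv : ∀ h : ℝ, MeasurePreserving (pathShift h) μ μ)
    (κ : ℝ) (hκ : 0 < κ)
    (hind : ∀ a b : ℝ, a ≤ b → κ ≤ b - a →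
      ProbabilityTheory.Indep (pastSigma a) (futureSigma b) μ)
    (A : Set (ℝ → ℝ)) (hA : MeasurableSet A)
    (hAinv : ∀ h : ℝ, pathShift h ⁻¹' A = A) :
    μ A = 0 ∨ μ A = 1 := by
  have hApast := (Measure.MeasureDense.of_generateFrom_isSetAlgebra_finite
    (μ := μ) isSetAlgebra_pastAlg gen_pastAlg).approx
  have hAfut := (Measure.MeasureDense.of_generateFrom_isSetAlgebra_finite
    (μ := μ) isSetAlgebra_futureAlg gen_futureAlg).approx
  set x := (μ A).toReal with hxdef
  have hx01 : 0 ≤ x ∧ x ≤ 1 := ⟨ENNReal.toReal_nonneg, by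
    simpa using ENNReal.toReal_mono (by simp) (prob_le_one (μ := μ) (s := A))⟩
  have key : ∀ ε : ℝ, 0 < ε → |x - x * x| ≤ 4 * ε := by
    intro ε hε
    obtain ⟨B, ⟨a, hBa⟩, hAB⟩ := hApast A hA (measure_ne_top μ A) ε hε
    obtain ⟨C, ⟨b, hCb⟩, hAC⟩ := hAfut A hA (measure_ne_top μ A) ε hε
    set h := a + κ - b with hh
    have hBmeas : MeasurableSet B := pastSigma_le a _ hBa
    have hCmeas : MeasurableSet C := futureSigma_le b _ hCb
    set C' := pathShift h ⁻¹' C with hC'def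
    have hC'fut : MeasurableSet[futureSigma (a + κ)] C' := by
      have := preimage_future (h := h) hCb
      rwa [show b + h = a + κ by rw [hh]; ring] at this
    have hC'meas : MeasurableSet C' := futureSigma_le (a + κ) _ hC'fut
    have hAC' : μ (A ∆ C') < ENNReal.ofReal ε := by
      have heq : A ∆ C' = pathShift h ⁻¹' (A ∆ C) := by
        rw [Set.preimage_symmDiff, hAinv h]
      rw [heq, (hinv h).measure_preimage (hA.symmDiff hCmeas).nullMeasurableSet]
      exact hAC
    have hindep : μ (B ∩ C') = μ B * μ C' :=
      ((ProbabilityTheory.Indep_iff _ _ μ).1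
        (hind a (a + κ) (by linarith) (by linarith))) B C' hBa hC'fut
    -- pass to real numbers
    have habs : ∀ S T : Set (ℝ → ℝ), MeasurableSet S → MeasurableSet T →
        |(μ S).toReal - (μ T).toReal| ≤ (μ (S ∆ T)).toReal := fun S T hS hT =>
      abs_measureReal_sub_le_measureReal_symmDiff' hS.nullMeasurableSet hT.nullMeasurableSet
        (measure_ne_top μ S) (measure_ne_top μ T)
    have hABr : (μ (A ∆ B)).toReal < ε :=
      (ENNReal.lt_ofReal_iff_toReal_lt (measure_ne_top μ _)).1 hAB
    have hACr : (μ (A ∆ C')).toReal < ε :=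
      (ENNReal.lt_ofReal_iff_toReal_lt (measure_ne_top μ _)).1 hAC'
    set p := (μ B).toReal with hpdef
    set q := (μ C').toReal with hqdef
    have hp01 : 0 ≤ p ∧ p ≤ 1 := ⟨ENNReal.toReal_nonneg, by
      simpa using ENNReal.toReal_mono (by simp) (prob_le_one (μ := μ) (s := B))⟩
    have hq01 : 0 ≤ q ∧ q ≤ 1 := ⟨ENNReal.toReal_nonneg, by
      simpa using ENNReal.toReal_mono (by simp) (prob_le_one (μ := μ) (s := C'))⟩
    have h1 : |x - p| < ε := lt_of_le_of_lt (habs A B hA hBmeas) hABr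
    have h2 : |x - q| < ε := lt_of_le_of_lt (habs A C' hA hC'meas) hACr
    have hsub : A ∆ (B ∩ C') ⊆ (A ∆ B) ∪ (A ∆ C') := by
      intro y hy
      simp only [Set.mem_symmDiff, Set.mem_union, Set.mem_inter_iff] at *
      tauto
    have h3 : |x - p * q| < 2 * ε := by
      have hm : (μ (A ∆ (B ∩ C'))).toReal ≤ (μ (A ∆ B)).toReal + (μ (A ∆ C')).toReal := by
        rw [← ENNReal.toReal_add (measure_ne_top μ _) (measure_ne_top μ _)]
        exact ENNReal.toReal_mono (by finiteness)
          ((measure_mono hsub).trans (measure_union_le _ _))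
      have h4 : |x - (μ (B ∩ C')).toReal| ≤ (μ (A ∆ (B ∩ C'))).toReal :=
        habs A (B ∩ C') hA (hBmeas.inter hC'meas)
      have h5 : (μ (B ∩ C')).toReal = p * q := by rw [hindep, ENNReal.toReal_mul]
      rw [h5] at h4
      linarith
    obtain ⟨h1a, h1b⟩ := abs_le.1 h1.le
    obtain ⟨h2a, h2b⟩ := abs_le.1 h2.le
    obtain ⟨h3a, h3b⟩ := abs_le.1 h3.le
    rw [abs_le]
    constructor <;> nlinarith [hx01.1, hx01.2, hp01.1, hp01.2, hq01.1, hq01.2]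
  have hxx : x = x * x := by
    by_contra hne
    have hpos : 0 < |x - x * x| := abs_pos.2 (sub_ne_zero.2 fun hc => hne hc)
    have := key (|x - x * x| / 8) (by positivity)
    linarith
  have hx01' : x = 0 ∨ x = 1 := by
    have : x * (1 - x) = 0 := by nlinarith
    rcases mul_eq_zero.1 this with h | h
    · exact Or.inl h
    · exact Or.inr (by linarith)
  rcases hx01' with h | h
  · left
    have := ENNReal.toReal_eq_zero_iff (μ A)
    rcases this.1 h with h' | h'
    · exact h'
    · exact absurd h' (measure_ne_top μ A)
  · right
    exact (ENNReal.toReal_eq_one_iff (μ A)).1 h
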